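/- If a finite connected graph G has diameter at least 3 and its minimum degree satisfies δ(G) ≤ c(G), then c_H(G) ≤ c(G) + 1. -/

import Mathlib

/-- A single move in (reflexive) Cops and Robbers: stay put or move to an adjacent vertex. -/
def CRStep {V : Type*} (G : SimpleGraph V) (u v : V) : Prop := u = v ∨ G.Adj u v

/-- The list of the robber's first `n` positions. -/
def robberHist {V : Type*} (r : ℕ → V) (n : ℕ) : List V := (List.range n).map r

/-- `k` cops have a winning strategy in (perfect-information) Cops and Robbers on `G`.
A cop strategy `F` assigns to every history of robber positions the positions of the `k` cops;
`F []` is the initial placement of the cops, chosen before the robber picks a start vertex,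
and consecutive cop positions must be legal moves.  Given a robber trajectory `r`
(every consecutive pair a legal move), the positions of the cops after their `n`-th move are
`F (robberHist r n)`.  The cops win if at some moment (after a cop move or after a robber
move) some cop occupies the robber's current vertex. -/
def CopsWin {V : Type*} (G : SimpleGraph V) (k : ℕ) : Prop :=
  ∃ F : List V → Fin k → V,
    (∀ l x i, CRStep G (F l i) (F (l ++ [x]) i)) ∧
    ∀ r : ℕ → V, (∀ n, CRStep G (r n) (r (n + 1))) →
      ∃ n, ∃ i, F (robberHist r n) i = r n ∨ F (robberHist r (n + 1)) i = r n

/-- The cop number of `G`: the least number of cops having a winning strategy. -/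
noncomputable def copNumber {V : Type*} (G : SimpleGraph V) : ℕ := sInf {k | CopsWin G k}

open Classical in
/-- The first `n` observations made by hyperopic cops using strategy `F` against the robber
trajectory `r`: after the robber's `n`-th move, the cops (positioned at `F` applied to the
previous observations) see the robber (observation `some (r n)`) unless the robber is
adjacent to every cop (observation `none`). -/
noncomputable def hObsList {V : Type*} (G : SimpleGraph V) {k : ℕ}
    (F : List (Option V) → Fin k → V) (r : ℕ → V) : ℕ → List (Option V)
  | 0 => []
  | n + 1 =>
      hObsList G F r n ++
        [if ∀ i, G.Adj (F (hObsList G F r n) i) (r n) then none else some (r n)]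

/-- `k` cops have a winning strategy in Hyperopic Cops and Robbers on `G`: a strategy
`F`, depending only on the history of observations (the robber being invisible exactly
when adjacent to every cop), which guarantees capture against every robber trajectory. -/
def HCopsWin {V : Type*} (G : SimpleGraph V) (k : ℕ) : Prop :=
  ∃ F : List (Option V) → Fin k → V,
    (∀ l o i, CRStep G (F l i) (F (l ++ [o]) i)) ∧
    ∀ r : ℕ → V, (∀ n, CRStep G (r n) (r (n + 1))) →
      ∃ n, ∃ i, F (hObsList G F r n) i = r n ∨ F (hObsList G F r (n + 1)) i = r n

/-- The hyperopic cop number of `G`: the least number of cops having a winning strategy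
in Hyperopic Cops and Robbers. -/
noncomputable def hyperopicCopNumber {V : Type*} (G : SimpleGraph V) : ℕ :=
  sInf {k | HCopsWin G k}


namespace HypAux

lemma takeWhile_append_stop {α : Type*} (p : α → Bool) {l : List α} (l' : List α)
    {x : α} (hx : x ∈ l) (hpx : p x = false) :
    (l ++ l').takeWhile p = l.takeWhile p := by
  induction l with
  | nil => cases hx
  | cons a t ih =>
    by_cases ha : p a
    · simp only [List.cons_append, List.takeWhile_cons, ha, if_pos]
      rcases List.mem_cons.mp hx with rfl | hxt
      · rw [ha] at hpx; cases hpx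
      · rw [ih hxt]
    · simp only [List.cons_append, List.takeWhile_cons]
      rw [if_neg ha, if_neg ha]

variable {V : Type*} [Fintype V] (G : SimpleGraph V) [DecidableRel G.Adj]

noncomputable def basePos {c : ℕ} (Fp : List V → Fin c → V) (u : V)
    (l : List (Option V)) : Fin (c + 1) → V :=
  Fin.cases u (fun j => Fp (l.map (fun o => o.getD u)) j)

open Classical in
noncomputable def catchSet {c : ℕ} (Fp : List V → Fin c → V) (u : V)
    (l : List (Option V)) : Finset V :=
  Finset.univ.filter (fun v => G.Adj u v ∧ ∀ i, G.Adj (basePos Fp u l i) v)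

open Classical in
noncomputable def hStrat {c : ℕ} (Fp : List V → Fin c → V) (u : V)
    (l : List (Option V)) : Fin (c + 1) → V :=
  if none ∈ l then
    fun i => if h : (i : ℕ) < (catchSet G Fp u (l.takeWhile (·.isSome))).toList.length
      then (catchSet G Fp u (l.takeWhile (·.isSome))).toList.get ⟨i, h⟩
      else basePos Fp u (l.takeWhile (·.isSome)) i
  else basePos Fp u l

lemma mem_catchSet_iff {c : ℕ} (Fp : List V → Fin c → V) (u : V)
    (l : List (Option V)) (v : V) :
    v ∈ catchSet G Fp u l ↔ G.Adj u v ∧ ∀ i, G.Adj (basePos Fp u l i) v := by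
  simp [catchSet]

lemma hStrat_of_not_mem {c : ℕ} (Fp : List V → Fin c → V) (u : V)
    {l : List (Option V)} (hl : none ∉ l) : hStrat G Fp u l = basePos Fp u l := by
  rw [hStrat, if_neg hl]

lemma all_isSome_of_not_mem {l : List (Option V)} (hl : none ∉ l) :
    ∀ x ∈ l, x.isSome = true := by
  intro x hx
  cases x with
  | none => exact absurd hx hl
  | some a => rfl

lemma takeWhile_none_append {l : List (Option V)} (hl : none ∉ l) (l' : List (Option V)) :
    ((l ++ l').takeWhile (·.isSome)) = l ++ l'.takeWhile (·.isSome) :=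
  List.takeWhile_append_of_pos (all_isSome_of_not_mem hl)

lemma takeWhile_none_single {l : List (Option V)} (hl : none ∉ l) :
    ((l ++ [none]).takeWhile (·.isSome)) = l := by
  rw [takeWhile_none_append hl]
  simp [List.takeWhile_cons]

lemma copsWin_card [Nonempty V] : CopsWin G (Fintype.card V) := by
  refine ⟨fun _ i => (Fintype.equivFin V).symm i, fun _ _ _ => Or.inl rfl, fun r hr => ?_⟩
  exact ⟨0, (Fintype.equivFin V) (r 0), Or.inl (by simp)⟩

set_option maxHeartbeats 1000000 in
lemma hStrat_step {c : ℕ} (Fp : List V → Fin c → V)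
    (hFstep : ∀ l x i, CRStep G (Fp l i) (Fp (l ++ [x]) i)) (u : V) :
    ∀ l o i, CRStep G (hStrat G Fp u l i) (hStrat G Fp u (l ++ [o]) i) := by
  intro l o i
  by_cases hl : none ∈ l
  · have hl' : none ∈ l ++ [o] := List.mem_append_left _ hl
    have ht : ((l ++ [o]).takeWhile (·.isSome)) = l.takeWhile (·.isSome) :=
      takeWhile_append_stop _ _ hl rfl
    rw [hStrat, if_pos hl, hStrat, if_pos hl', ht]
    exact Or.inl rfl
  · cases o with
    | none =>
      have hl' : none ∈ l ++ [none] := by simp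
      rw [hStrat, if_neg hl, hStrat, if_pos hl', takeWhile_none_single hl]
      by_cases h : (i : ℕ) < (catchSet G Fp u l).toList.length
      · rw [dif_pos h]
        have hmem : (catchSet G Fp u l).toList.get ⟨i, h⟩ ∈ catchSet G Fp u l :=
          Finset.mem_toList.mp (List.get_mem _ _)
        exact Or.inr (((mem_catchSet_iff G Fp u l _).mp hmem).2 i)
      · rw [dif_neg h]; exact Or.inl rfl
    | some x =>
      have hl' : none ∉ l ++ [some x] := by
        intro h
        rcases List.mem_append.mp h with h1 | h1
        · exact hl h1
        · simp at h1
      rw [hStrat, if_neg hl, hStrat, if_neg hl']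
      induction i using Fin.cases with
      | zero => exact Or.inl (by simp [basePos])
      | succ j =>
        have h1 : basePos Fp u l j.succ = Fp (l.map (fun o => o.getD u)) j := by
          simp [basePos]
        have h2 : basePos Fp u (l ++ [some x]) j.succ
            = Fp (l.map (fun o => o.getD u) ++ [x]) j := by
          simp [basePos]
        rw [h1, h2]
        exact hFstep _ _ _

lemma obs_eq {c : ℕ} (Fp : List V → Fin c → V) (u : V) (r : ℕ → V) (n : ℕ)
    (h : ∀ m < n, ¬ ∀ i, G.Adj (hStrat G Fp u (hObsList G (hStrat G Fp u) r m) i) (r m)) :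
    hObsList G (hStrat G Fp u) r n = (List.range n).map (fun m => some (r m)) := by
  induction n with
  | zero => rfl
  | succ n ih =>
    rw [hObsList, if_neg (h n (Nat.lt_succ_self n)),
      ih (fun m hm => h m (hm.trans (Nat.lt_succ_self n))), List.range_succ, List.map_append]
    rfl

set_option maxHeartbeats 1000000 in
lemma hStrat_win {c : ℕ} (Fp : List V → Fin c → V)
    (hFwin : ∀ r : ℕ → V, (∀ n, CRStep G (r n) (r (n + 1))) →
      ∃ n, ∃ i, Fp (robberHist r n) i = r n ∨ Fp (robberHist r (n + 1)) i = r n)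
    (u : V) (hdeg : G.degree u ≤ c) :
    ∀ r : ℕ → V, (∀ n, CRStep G (r n) (r (n + 1))) →
      ∃ n, ∃ i, hStrat G Fp u (hObsList G (hStrat G Fp u) r n) i = r n ∨
        hStrat G Fp u (hObsList G (hStrat G Fp u) r (n + 1)) i = r n := by
  classical
  intro r hr
  by_cases hinv : ∃ n, ∀ i, G.Adj (hStrat G Fp u (hObsList G (hStrat G Fp u) r n) i) (r n)
  · -- the robber is invisible at some moment: catch it at the first such moment
    set n := Nat.find hinv with hn_def
    have hn : ∀ i, G.Adj (hStrat G Fp u (hObsList G (hStrat G Fp u) r n) i) (r n) :=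
      Nat.find_spec hinv
    have hobs : hObsList G (hStrat G Fp u) r n = (List.range n).map (fun m => some (r m)) :=
      obs_eq G Fp u r n (fun m hm => Nat.find_min hinv hm)
    have hnone : none ∉ hObsList G (hStrat G Fp u) r n := by
      rw [hobs]; simp
    have hb : hStrat G Fp u (hObsList G (hStrat G Fp u) r n)
        = basePos Fp u (hObsList G (hStrat G Fp u) r n) := hStrat_of_not_mem G Fp u hnone
    have hadj_u : G.Adj u (r n) := by
      have := hn 0
      rw [hb] at this
      simpa [basePos] using this
    have hmem : r n ∈ catchSet G Fp u (hObsList G (hStrat G Fp u) r n) := by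
      rw [mem_catchSet_iff]
      exact ⟨hadj_u, fun i => by have := hn i; rwa [hb] at this⟩
    obtain ⟨⟨j, hj⟩, hget⟩ := List.mem_iff_get.mp (Finset.mem_toList.mpr hmem)
    have hsub : catchSet G Fp u (hObsList G (hStrat G Fp u) r n) ⊆ G.neighborFinset u := by
      intro v hv
      rw [SimpleGraph.mem_neighborFinset]
      exact ((mem_catchSet_iff G Fp u _ v).mp hv).1
    have hlen : (catchSet G Fp u (hObsList G (hStrat G Fp u) r n)).toList.length ≤ c := by
      rw [Finset.length_toList]
      refine le_trans (Finset.card_le_card hsub) ?_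
      rw [SimpleGraph.card_neighborFinset_eq_degree]
      exact hdeg
    have hjc : (j : ℕ) < c + 1 := lt_of_lt_of_le (hj.trans_le hlen) (Nat.le_succ c)
    refine ⟨n, ⟨j, hjc⟩, Or.inr ?_⟩
    have hobs1 : hObsList G (hStrat G Fp u) r (n + 1)
        = hObsList G (hStrat G Fp u) r n ++ [none] := by
      rw [hObsList, if_pos hn]
    rw [hobs1, hStrat, if_pos (List.mem_append_right _ (List.mem_singleton_self _)),
      takeWhile_none_single hnone, dif_pos hj]
    exact hget
  · -- the robber is always visible: the perfect-information strategy wins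
    have hobs : ∀ m, hObsList G (hStrat G Fp u) r m
        = (List.range m).map (fun k => some (r k)) :=
      fun m => obs_eq G Fp u r m (fun k _ hk => hinv ⟨k, hk⟩)
    have hnone : ∀ m, none ∉ hObsList G (hStrat G Fp u) r m := by
      intro m; rw [hobs m]; simp
    have hdec : ∀ m, (hObsList G (hStrat G Fp u) r m).map (fun o => o.getD u)
        = robberHist r m := by
      intro m
      rw [hobs m, List.map_map, robberHist]
      rfl
    obtain ⟨n, i, hi⟩ := hFwin r hr
    refine ⟨n, i.succ, ?_⟩
    have key : ∀ m, hStrat G Fp u (hObsList G (hStrat G Fp u) r m) i.succ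
        = Fp (robberHist r m) i := by
      intro m
      rw [hStrat_of_not_mem G Fp u (hnone m)]
      simp [basePos, hdec m]
    rcases hi with h | h
    · exact Or.inl (by rw [key n]; exact h)
    · exact Or.inr (by rw [key (n + 1)]; exact h)

end HypAux

/-- If a finite connected graph `G` has diameter at least 3 and its
minimum degree satisfies `δ(G) ≤ c(G)`, then `c_H(G) ≤ c(G) + 1`. -/
theorem hyperopicCopNumber_le_of_three_le_diam_of_minDegree_le {V : Type*} [Fintype V]
    (G : SimpleGraph V) [DecidableRel G.Adj] (hG : G.Connected) (hd : 3 ≤ G.diam)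
    (hδ : G.minDegree ≤ copNumber G) :
    hyperopicCopNumber G ≤ copNumber G + 1 := by
  classical
  have hne : Nonempty V := hG.nonempty
  have hcw : CopsWin G (copNumber G) :=
    Nat.sInf_mem (⟨Fintype.card V, show CopsWin G (Fintype.card V) from HypAux.copsWin_card G⟩ :
      {k | CopsWin G k}.Nonempty)
  obtain ⟨Fp, hFstep, hFwin⟩ := hcw
  obtain ⟨u, hu⟩ := G.exists_minimal_degree_vertex
  have hdeg : G.degree u ≤ copNumber G := hu ▸ hδ
  refine Nat.sInf_le ?_
  exact ⟨HypAux.hStrat G Fp u, HypAux.hStrat_step G Fp hFstep u,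
    HypAux.hStrat_win G Fp hFwin u hdeg⟩
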